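/- (Precise form of Lemma E.11.) Let ĉ, m̂, λ̂ be real numbers with ĉ > 0, λ̂ ≠ 0 and m̂·λ̂ ≤ ĉ². Then |(ĉ − √(ĉ² − m̂·λ̂))/λ̂ − m̂/(2ĉ)| = m̂²·|λ̂| / ( 2ĉ·(ĉ + √(ĉ² − m̂·λ̂))² ) ≤ m̂²·|λ̂| / (2ĉ³). -/

import Mathlib

theorem stmt15 (chat mhat lamhat : ℝ) (hc : 0 < chat) (hlam : lamhat ≠ 0)
    (h : mhat * lamhat ≤ chat ^ 2) :
    |(chat - Real.sqrt (chat ^ 2 - mhat * lamhat)) / lamhat - mhat / (2 * chat)| =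
        mhat ^ 2 * |lamhat| /
          (2 * chat * (chat + Real.sqrt (chat ^ 2 - mhat * lamhat)) ^ 2) ∧
      mhat ^ 2 * |lamhat| /
          (2 * chat * (chat + Real.sqrt (chat ^ 2 - mhat * lamhat)) ^ 2) ≤
        mhat ^ 2 * |lamhat| / (2 * chat ^ 3) := by
  set s := Real.sqrt (chat ^ 2 - mhat * lamhat) with hsdef
  have hs0 : 0 ≤ s := Real.sqrt_nonneg _
  have hs2 : s ^ 2 = chat ^ 2 - mhat * lamhat := by
    rw [hsdef, Real.sq_sqrt (by linarith)]
  have hcs : 0 < chat + s := by linarith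
  have hD : 0 < 2 * chat * (chat + s) ^ 2 := by positivity
  have key : (chat - s) / lamhat - mhat / (2 * chat)
      = mhat ^ 2 * lamhat / (2 * chat * (chat + s) ^ 2) := by
    field_simp
    linear_combination (-((chat+s)^2 + chat^2 - s^2 + lamhat*mhat)) * hs2
  constructor
  · rw [key, abs_div, abs_of_pos hD, abs_mul, abs_of_nonneg (sq_nonneg mhat)]
  · apply div_le_div_of_nonneg_left (by positivity) (by positivity)
    nlinarith [sq_nonneg s, mul_nonneg hc.le hs0]
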